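/- Let 0 < a₁ ≤ a₂ and m ∈ M_{L²}(M,ω). Fix ψ₁ ∈ C_c^∞(B_4(0)) with 0 ≤ ψ₁ ≤ 1 and ψ₁ = 1 on B_2(0), and for R_n > 0 set ψ_{R_n}(x) := ψ₁(x/R_n) (so ψ_{R_n} ∈ C_c^∞(B_{4R_n}(0)), ψ_{R_n} ≥ 0, ψ_{R_n} = 1 on B_{2R_n}(0)) and m_{R_n} := m·χ_{B_{R_n}(0)}. Then there exist C₀ = C₀(a₁,a₂,ω,ψ₁) > 0 and R₀ = R₀(a₁,a₂,ω,ψ₁) > 0 such that for all a with a₁ ≤ a ≤ a₂ and all R_n ≥ R₀: ∫_{ℝ³} |∇ψ_{R_n}|² − D_a(m_{R_n}, ψ_{R_n}²) ≤ − C₀ R_n³. -/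

import Mathlib

open MeasureTheory Metric Real Filter Topology ENNReal
open scoped RealInnerProductSpace

noncomputable section

abbrev E3 : Type := EuclideanSpace ℝ (Fin 3)

/-- Laplacian via second derivatives along coordinate directions. -/
def lap (f : E3 → ℝ) (x : E3) : ℝ :=
  ∑ i : Fin 3,
    iteratedFDeriv ℝ 2 f x ![EuclideanSpace.single i (1:ℝ), EuclideanSpace.single i (1:ℝ)]

/-- Smooth compactly supported test functions. -/
def IsTest (ψ : E3 → ℝ) : Prop := ContDiff ℝ (⊤ : ℕ∞) ψ ∧ HasCompactSupport ψ

/-- Uniform Sobolev norm `H^k_unif`, `ℝ≥0∞`-valued. -/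
def HUnifNorm (k : ℕ) (f : E3 → ℝ) : ℝ≥0∞ :=
  ∑ j ∈ Finset.range (k + 1), ⨆ x : E3,
    eLpNorm (fun y => ‖iteratedFDeriv ℝ j f y‖) 2 (volume.restrict (ball x 1))

/-- The class `M_{H^k}(M, (ω₀,ω₁))` of nuclear distributions. -/
def MemM (k : ℕ) (M ω₀ ω₁ : ℝ) (m : E3 → ℝ) : Prop :=
  (∀ x, 0 ≤ m x) ∧ HUnifNorm k m ≤ ENNReal.ofReal M ∧
    ∀ R > (0:ℝ), ∀ x : E3, ω₀ * R ^ 3 - ω₁ ≤ ∫ z in ball x R, m z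

/-- The TFW Yukawa equations, in the sense of distributions. -/
def YukEqs (a : ℝ) (m u φ : E3 → ℝ) : Prop :=
  (∀ ψ, IsTest ψ →
    ∫ x, u x * lap ψ x = ∫ x, ((5/3) * u x ^ ((7:ℝ)/3) - φ x * u x) * ψ x) ∧
  (∀ ψ, IsTest ψ →
    ∫ x, (a ^ 2 * φ x * ψ x - φ x * lap ψ x) = ∫ x, 4 * π * (m x - u x ^ 2) * ψ x)

/-- The TFW Coulomb equations, in the sense of distributions. -/
def CoulombEqs (m u φ : E3 → ℝ) : Prop :=
  (∀ ψ, IsTest ψ →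
    ∫ x, u x * lap ψ x = ∫ x, ((5/3) * u x ^ ((7:ℝ)/3) - φ x * u x) * ψ x) ∧
  (∀ ψ, IsTest ψ →
    ∫ x, (- φ x * lap ψ x) = ∫ x, 4 * π * (m x - u x ^ 2) * ψ x)

def YukawaSol (a : ℝ) (m u φ : E3 → ℝ) : Prop :=
  HUnifNorm 4 u < ⊤ ∧ HUnifNorm 2 φ < ⊤ ∧ YukEqs a m u φ

def CoulombSol (m u φ : E3 → ℝ) : Prop :=
  HUnifNorm 4 u < ⊤ ∧ HUnifNorm 2 φ < ⊤ ∧ CoulombEqs m u φ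

def YukawaGS (a : ℝ) (m u φ : E3 → ℝ) : Prop := YukawaSol a m u φ ∧ ∀ x, 0 ≤ u x

def CoulombGS (m u φ : E3 → ℝ) : Prop := CoulombSol m u φ ∧ ∀ x, 0 ≤ u x

/-- Sum of the norms of all partial derivatives of order ≤ k at a point. -/
def DSum (k : ℕ) (f : E3 → ℝ) (x : E3) : ℝ :=
  ∑ j ∈ Finset.range (k + 1), ‖iteratedFDeriv ℝ j f x‖

/-- Sum of the squared norms of all partial derivatives of order ≤ k at a point. -/
def DSumSq (k : ℕ) (f : E3 → ℝ) (x : E3) : ℝ :=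
  ∑ j ∈ Finset.range (k + 1), ‖iteratedFDeriv ℝ j f x‖ ^ 2

/-- The class `H_γ` of test functions. -/
def MemHgamma (γ : ℝ) (ξ : E3 → ℝ) : Prop :=
  MemLp ξ 2 volume ∧ MemLp (fun x => ‖fderiv ℝ ξ x‖) 2 volume ∧
    ∀ᵐ x ∂volume, ‖fderiv ℝ ξ x‖ ≤ γ * |ξ x|

/-- Membership in the Sobolev space `H^k(ℝ³)`. -/
def MemHk (k : ℕ) (f : E3 → ℝ) : Prop :=
  ∀ j ∈ Finset.range (k + 1), MemLp (fun x => ‖iteratedFDeriv ℝ j f x‖) 2 volume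

/-- (An equivalent version of) the `H^k(ℝ³)` norm. -/
def HkNorm (k : ℕ) (f : E3 → ℝ) : ℝ :=
  ∑ j ∈ Finset.range (k + 1),
    (eLpNorm (fun x => ‖iteratedFDeriv ℝ j f x‖) 2 volume).toReal

/-- The Yukawa interaction `D_a(f,g)`. -/
def Da (a : ℝ) (f g : E3 → ℝ) : ℝ :=
  ∫ x, ∫ y, f x * (Real.exp (-a * ‖x - y‖) / ‖x - y‖) * g y

/-- Convolution with the Yukawa potential `Y_a`. -/
def Yconv (a : ℝ) (f : E3 → ℝ) (x : E3) : ℝ :=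
  ∫ y, f y * (Real.exp (-a * ‖x - y‖) / ‖x - y‖)

/-- The TFW Yukawa energy functional. -/
def Etfw (a : ℝ) (v m : E3 → ℝ) : ℝ :=
  (∫ x, ‖fderiv ℝ v x‖ ^ 2) + (∫ x, v x ^ ((10:ℝ)/3))
    + (1/2) * Da a (fun x => m x - v x ^ 2) (fun x => m x - v x ^ 2)

/-- The admissible class for the TFW Yukawa minimisation problem. -/
def Adm (v : E3 → ℝ) : Prop :=
  (∀ x, 0 ≤ v x) ∧ MemLp (fun x => ‖fderiv ℝ v x‖) 2 volume
    ∧ MemLp v (ENNReal.ofReal (10/3)) volume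

/-- `u` is a minimiser of the TFW Yukawa minimisation problem `I^TFW_a(m)`. -/
def IsMinimiser (a : ℝ) (m u : E3 → ℝ) : Prop :=
  Adm u ∧ ∀ v, Adm v → Etfw a u m ≤ Etfw a v m

/-- `u` is the (a.e.-)unique minimiser of `I^TFW_a(m)`. -/
def UniqueMin (a : ℝ) (m u : E3 → ℝ) : Prop :=
  IsMinimiser a m u ∧ ∀ v, IsMinimiser a m v → v =ᵐ[volume] u



section AuxYukawa

private lemma shells_cover :
    ball (0:E3) 1 ⊆ {0} ∪ ⋃ k : ℕ, (ball (0:E3) ((1/2:ℝ)^k) \ ball 0 ((1/2:ℝ)^(k+1))) := by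
  intro z hz
  rcases eq_or_ne z 0 with h0 | h0
  · exact Or.inl (by simp [h0])
  · refine Or.inr ?_
    have hz1 : ‖z‖ < 1 := mem_ball_zero_iff.1 hz
    have hzpos : 0 < ‖z‖ := norm_pos_iff.2 h0
    have hex : ∃ n : ℕ, (1/2:ℝ)^(n+1) ≤ ‖z‖ := by
      obtain ⟨n, hn⟩ := exists_pow_lt_of_lt_one hzpos (by norm_num : (1/2:ℝ) < 1)
      exact ⟨n, le_of_lt (lt_of_le_of_lt
        (pow_le_pow_of_le_one (by norm_num) (by norm_num) (Nat.le_succ n)) hn)⟩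
    classical
    set k := Nat.find hex with hk
    refine Set.mem_iUnion.2 ⟨k, ?_, ?_⟩
    · rw [mem_ball_zero_iff]
      rcases Nat.eq_zero_or_pos k with h | h
      · rw [h]; simpa using hz1
      · have hmin := Nat.find_min hex (show k - 1 < k from Nat.sub_lt h one_pos)
        have hk1 : k - 1 + 1 = k := Nat.succ_pred_eq_of_pos h
        rw [hk1] at hmin
        exact lt_of_not_ge hmin
    · intro hmem
      exact absurd (Nat.find_spec hex) (not_le.2 (mem_ball_zero_iff.1 hmem))

private lemma integrableOn_inv_norm_unitBall :
    IntegrableOn (fun z : E3 => ‖z‖⁻¹) (ball (0:E3) 1) volume := by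
  have hmeas : Measurable fun z : E3 => ‖z‖⁻¹ := measurable_norm.inv
  refine ⟨hmeas.aestronglyMeasurable.restrict, ?_⟩
  rw [hasFiniteIntegral_iff_norm]
  set v := volume (ball (0:E3) 1) with hv
  have hvlt : v < ⊤ := measure_ball_lt_top
  have hshell : ∀ k : ℕ,
      (∫⁻ z in ball (0:E3) ((1/2:ℝ)^k) \ ball 0 ((1/2:ℝ)^(k+1)),
        ENNReal.ofReal ‖(‖z‖⁻¹ : ℝ)‖ ∂volume) ≤ ENNReal.ofReal (2 * (1/4:ℝ)^k) * v := by
    intro k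
    have h1 : (∫⁻ z in ball (0:E3) ((1/2:ℝ)^k) \ ball 0 ((1/2:ℝ)^(k+1)),
        ENNReal.ofReal ‖(‖z‖⁻¹ : ℝ)‖ ∂volume)
        ≤ ∫⁻ _ in ball (0:E3) ((1/2:ℝ)^k) \ ball 0 ((1/2:ℝ)^(k+1)),
          ENNReal.ofReal (((1/2:ℝ)^(k+1))⁻¹) ∂volume := by
      apply setLIntegral_mono measurable_const
      intro z hz
      have hz2 : (1/2:ℝ)^(k+1) ≤ ‖z‖ := by
        have := hz.2
        rw [mem_ball_zero_iff, not_lt] at this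
        exact this
      apply ENNReal.ofReal_le_ofReal
      rw [Real.norm_eq_abs, abs_of_nonneg (by positivity)]
      exact inv_anti₀ (by positivity) hz2
    have h2 : (∫⁻ _ in ball (0:E3) ((1/2:ℝ)^k) \ ball 0 ((1/2:ℝ)^(k+1)),
          ENNReal.ofReal (((1/2:ℝ)^(k+1))⁻¹) ∂volume)
        ≤ ENNReal.ofReal (((1/2:ℝ)^(k+1))⁻¹) * volume (ball (0:E3) ((1/2:ℝ)^k)) := by
      rw [setLIntegral_const]
      exact mul_le_mul_right (measure_mono Set.diff_subset) _
    have h3 : volume (ball (0:E3) ((1/2:ℝ)^k))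
        = ENNReal.ofReal (((1/2:ℝ)^k)^3) * v := by
      rw [hv, Measure.addHaar_ball volume 0 (by positivity : (0:ℝ) ≤ (1/2:ℝ)^k)]
      congr 2
      rw [show Module.finrank ℝ E3 = 3 from finrank_euclideanSpace_fin]
    have h4 : ENNReal.ofReal (((1/2:ℝ)^(k+1))⁻¹) * (ENNReal.ofReal (((1/2:ℝ)^k)^3) * v)
        = ENNReal.ofReal (2 * (1/4:ℝ)^k) * v := by
      rw [← mul_assoc, ← ENNReal.ofReal_mul (by positivity)]
      congr 2
      have hq : (1/4:ℝ)^k = ((1/2:ℝ)^k)^2 := by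
        rw [← pow_mul, mul_comm, pow_mul]; norm_num
      have hp : ((1/2:ℝ)^k) ≠ 0 := by positivity
      rw [hq, pow_succ]
      field_simp
    calc (∫⁻ z in ball (0:E3) ((1/2:ℝ)^k) \ ball 0 ((1/2:ℝ)^(k+1)),
        ENNReal.ofReal ‖(‖z‖⁻¹ : ℝ)‖ ∂volume) ≤ _ := h1
      _ ≤ _ := h2
      _ = _ := by rw [h3, h4]
  have hsum : (∑' k : ℕ, ENNReal.ofReal (2 * (1/4:ℝ)^k) * v) < ⊤ := by
    rw [ENNReal.tsum_mul_right]
    apply ENNReal.mul_lt_top _ hvlt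
    have hs : Summable (fun k : ℕ => 2 * (1/4:ℝ)^k) :=
      (summable_geometric_of_lt_one (by norm_num) (by norm_num)).mul_left 2
    rw [← ENNReal.ofReal_tsum_of_nonneg (fun n => by positivity) hs]
    exact ENNReal.ofReal_lt_top
  calc (∫⁻ z in ball (0:E3) 1, ENNReal.ofReal ‖(‖z‖⁻¹ : ℝ)‖ ∂volume)
      ≤ ∫⁻ z in ({0} ∪ ⋃ k : ℕ, (ball (0:E3) ((1/2:ℝ)^k) \ ball 0 ((1/2:ℝ)^(k+1)))),
          ENNReal.ofReal ‖(‖z‖⁻¹ : ℝ)‖ ∂volume := lintegral_mono_set shells_cover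
    _ ≤ (∫⁻ z in ({0} : Set E3), ENNReal.ofReal ‖(‖z‖⁻¹ : ℝ)‖ ∂volume)
        + ∫⁻ z in (⋃ k : ℕ, (ball (0:E3) ((1/2:ℝ)^k) \ ball 0 ((1/2:ℝ)^(k+1)))),
          ENNReal.ofReal ‖(‖z‖⁻¹ : ℝ)‖ ∂volume := lintegral_union_le _ _ _
    _ ≤ 0 + ∑' k : ℕ, ∫⁻ z in ball (0:E3) ((1/2:ℝ)^k) \ ball 0 ((1/2:ℝ)^(k+1)),
          ENNReal.ofReal ‖(‖z‖⁻¹ : ℝ)‖ ∂volume := by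
        gcongr
        · exact le_of_eq (setLIntegral_measure_zero _ _ (measure_singleton 0))
        · exact lintegral_iUnion_le _ _
    _ ≤ 0 + ∑' k : ℕ, ENNReal.ofReal (2 * (1/4:ℝ)^k) * v := by
        gcongr with k
        exact hshell k
    _ < ⊤ := by simpa using hsum

private lemma integrable_yukawa {a : ℝ} (ha : 0 < a) :
    Integrable (fun z : E3 => Real.exp (-a * ‖z‖) / ‖z‖) volume := by
  have hmeas : AEStronglyMeasurable (fun z : E3 => Real.exp (-a * ‖z‖) / ‖z‖) volume :=
    (((measurable_norm.const_mul (-a)).exp).div measurable_norm).aestronglyMeasurable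
  rw [← integrableOn_univ, ← Set.union_compl_self (ball (0:E3) 1)]
  apply IntegrableOn.union
  · apply Integrable.mono' integrableOn_inv_norm_unitBall hmeas.restrict
    filter_upwards with z
    rw [Real.norm_eq_abs, abs_of_nonneg (by positivity)]
    rcases eq_or_ne z 0 with rfl | hz
    · simp
    · have hz' : 0 < ‖z‖ := norm_pos_iff.2 hz
      rw [← one_div]
      refine (div_le_div_iff_of_pos_right hz').2 ?_
      calc Real.exp (-a * ‖z‖) ≤ Real.exp 0 :=
            Real.exp_le_exp.2 (by nlinarith [norm_nonneg z])
        _ = 1 := Real.exp_zero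
  · have hint : Integrable (fun x : E3 => ((1:ℝ) + ‖x‖ ^ 2) ^ (-(4:ℝ)/2)) volume :=
      integrable_rpow_neg_one_add_norm_sq
        (by rw [show Module.finrank ℝ E3 = 3 from finrank_euclideanSpace_fin]; norm_num)
    apply Integrable.mono' ((hint.const_mul (96/a^4)).restrict) hmeas.restrict
    rw [ae_restrict_iff' measurableSet_ball.compl]
    filter_upwards with z hz
    have hr1 : (1:ℝ) ≤ ‖z‖ := by
      have := hz
      rw [Set.mem_compl_iff, mem_ball_zero_iff, not_lt] at this
      exact this
    set r := ‖z‖ with hrdef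
    rw [Real.norm_eq_abs, abs_of_nonneg (by positivity)]
    have hrpow : ((1:ℝ) + r^2) ^ (-(4:ℝ)/2) = (((1:ℝ)+r^2)^2)⁻¹ := by
      rw [show (-(4:ℝ)/2) = ((-2:ℤ):ℝ) by norm_num, Real.rpow_intCast, zpow_neg, zpow_two,
        pow_two]
      ring
    rw [hrpow]
    have hkey : (a*r)^4/24 ≤ Real.exp (a*r) := by
      have h5 := Real.sum_le_exp_of_nonneg (by positivity : (0:ℝ) ≤ a*r) 5
      have hterm : (a*r)^4/24 ≤ ∑ i ∈ Finset.range 5, (a*r)^i / (Nat.factorial i) := by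
        rw [Finset.sum_range_succ]
        have hge : (0:ℝ) ≤ ∑ i ∈ Finset.range 4, (a*r)^i / (Nat.factorial i) :=
          Finset.sum_nonneg fun i _ => by positivity
        have : ((Nat.factorial 4 : ℕ) : ℝ) = 24 := by norm_num [Nat.factorial]
        rw [this]
        linarith
      linarith
    have hc : 96/a^4 * ((a*r)^4/24) = 4*r^4 := by
      field_simp
      ring
    have hr4 : (1:ℝ) ≤ r^4 := one_le_pow₀ hr1
    have h2 : ((1:ℝ)+r^2)^2 ≤ 96/a^4 * Real.exp (a*r) := by
      have hmul := mul_le_mul_of_nonneg_left hkey (by positivity : (0:ℝ) ≤ 96/a^4)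
      rw [hc] at hmul
      nlinarith [sq_nonneg (r^2 - 1)]
    have hepos : (0:ℝ) < Real.exp (a*r) := Real.exp_pos _
    have hP : (0:ℝ) < ((1:ℝ)+r^2)^2 := by positivity
    calc Real.exp (-a * r) / r ≤ Real.exp (-a * r) := by
          apply div_le_self (Real.exp_nonneg _) hr1
      _ ≤ 96/a^4 * (((1:ℝ)+r^2)^2)⁻¹ := by
          rw [neg_mul, Real.exp_neg,
            show 96/a^4 * (((1:ℝ)+r^2)^2)⁻¹ = (96/a^4)/(((1:ℝ)+r^2)^2) by ring,
            ← one_div, div_le_div_iff₀ hepos hP]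
          linarith

private lemma kernel_mono {a₁ a d : ℝ} (ha₁ : 0 ≤ a₁) (h : a₁ ≤ a) (hd : 0 ≤ d) :
    Real.exp (-a * d) / d ≤ Real.exp (-a₁ * d) / d := by
  rcases eq_or_lt_of_le hd with h0 | h0
  · rw [← h0]; simp
  · refine (div_le_div_iff_of_pos_right h0).2 (Real.exp_le_exp.2 ?_)
    nlinarith

end AuxYukawa

set_option maxHeartbeats 1000000 in
/-- **Lemma (energy lowering of large-scale test functions, uniformly in `a ∈ [a₁,a₂]`).** -/
theorem technical_lemma
    (a₁ a₂ ω₀ ω₁ : ℝ) (ha₁ : 0 < a₁) (ha₁₂ : a₁ ≤ a₂) (hω₀ : 0 < ω₀) (hω₁ : 0 < ω₁)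
    (ψ₁ : E3 → ℝ) (hψsm : ContDiff ℝ (⊤ : ℕ∞) ψ₁) (hψsupp : tsupport ψ₁ ⊆ ball 0 4)
    (hψ0 : ∀ x, 0 ≤ ψ₁ x) (hψle : ∀ x, ψ₁ x ≤ 1)
    (hψone : ∀ x ∈ ball (0:E3) 2, ψ₁ x = 1) :
    ∃ C₀ > (0:ℝ), ∃ R₀ > (0:ℝ), ∀ M > (0:ℝ), ∀ m : E3 → ℝ, MemM 0 M ω₀ ω₁ m →
      ∀ a : ℝ, a₁ ≤ a → a ≤ a₂ → ∀ Rn : ℝ, R₀ ≤ Rn →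
      (∫ x, ‖fderiv ℝ (fun y : E3 => ψ₁ (Rn⁻¹ • y)) x‖ ^ 2)
          - Da a ((ball (0:E3) Rn).indicator m) (fun x => ψ₁ (Rn⁻¹ • x) ^ 2)
        ≤ -C₀ * Rn ^ 3 := by
  classical
  have hψc : Continuous ψ₁ := hψsm.continuous
  have hψcs : HasCompactSupport ψ₁ :=
    IsCompact.of_isClosed_subset (isCompact_closedBall (0:E3) 4) (isClosed_tsupport ψ₁)
      (hψsupp.trans ball_subset_closedBall)
  have hψdiff : Differentiable ℝ ψ₁ := hψsm.differentiable (by simp)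
  have hfdcs : HasCompactSupport (fderiv ℝ ψ₁) := HasCompactSupport.fderiv (𝕜 := ℝ) hψcs
  have hfd : Continuous (fderiv ℝ ψ₁) := hψsm.continuous_fderiv (by simp)
  obtain ⟨L, hL⟩ := hfdcs.exists_bound_of_continuous hfd
  have hL0 : 0 ≤ L := le_trans (norm_nonneg _) (hL 0)
  set vb := (volume (ball (0:E3) 1)).toReal with hvb
  have hvb0 : 0 < vb :=
    ENNReal.toReal_pos (measure_ball_pos volume 0 one_pos).ne' measure_ball_lt_top.ne
  set A := 64 * L^2 * vb with hA
  have hA0 : 0 ≤ A := by positivity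
  set c₁ := Real.exp (-a₂) * vb with hc₁def
  have hc₁0 : 0 < c₁ := by positivity
  have hω₀' : 0 < c₁ * ω₀ := mul_pos hc₁0 hω₀
  refine ⟨c₁ * ω₀ / 2, by positivity, 1 + 4*A/(c₁*ω₀) + 4*ω₁/ω₀, by positivity, ?_⟩
  intro M hM m hm a ha₁a haa₂ Rn hRn
  obtain ⟨hm0, -, hm3⟩ := hm
  have ha0 : 0 < a := lt_of_lt_of_le ha₁ ha₁a
  have hQ1 : 0 ≤ 4*A/(c₁*ω₀) := by positivity
  have hQ2 : 0 ≤ 4*ω₁/ω₀ := by positivity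
  have hR1 : (1:ℝ) ≤ Rn := by linarith
  have hRpos : (0:ℝ) < Rn := by linarith
  have hRA : 4*A/(c₁*ω₀) ≤ Rn := by linarith
  have hRω : 4*ω₁/ω₀ ≤ Rn := by linarith
  have hinv : Rn⁻¹ * Rn = 1 := inv_mul_cancel₀ hRpos.ne'
  have hsm : ∀ y : E3, ‖Rn⁻¹ • y‖ = Rn⁻¹ * ‖y‖ := fun y => by
    rw [norm_smul, Real.norm_eq_abs, abs_inv, abs_of_pos hRpos]
  set φR : E3 → ℝ := fun y => ψ₁ (Rn⁻¹ • y) with hφR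
  set Lmap : E3 →L[ℝ] E3 := Rn⁻¹ • ContinuousLinearMap.id ℝ E3 with hLmap
  have hφeq : φR = ψ₁ ∘ Lmap := by
    funext y
    simp [hφR, hLmap, Function.comp]
  have hcomp : ∀ x : E3, fderiv ℝ φR x = (fderiv ℝ ψ₁ (Rn⁻¹ • x)).comp Lmap := by
    intro x
    have h9 : fderiv ℝ (ψ₁ ∘ Lmap) x = (fderiv ℝ ψ₁ (Lmap x)).comp Lmap := by
      rw [fderiv_comp x (hψdiff _) Lmap.differentiableAt, Lmap.fderiv]
    have h10 : Lmap x = Rn⁻¹ • x := by simp [hLmap]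
    rw [hφeq, h9, h10]
  have hLnorm : ‖Lmap‖ ≤ Rn⁻¹ := by
    rw [hLmap]
    refine le_trans (ContinuousLinearMap.opNorm_smul_le Rn⁻¹ (ContinuousLinearMap.id ℝ E3)) ?_
    have h1 : ‖(Rn⁻¹ : ℝ)‖ = Rn⁻¹ := by
      rw [Real.norm_eq_abs, abs_inv, abs_of_pos hRpos]
    rw [h1]
    calc Rn⁻¹ * ‖ContinuousLinearMap.id ℝ E3‖ ≤ Rn⁻¹ * 1 :=
          mul_le_mul_of_nonneg_left ContinuousLinearMap.norm_id_le (by positivity)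
      _ = Rn⁻¹ := mul_one _
  have hgradbd : ∀ x : E3, ‖fderiv ℝ φR x‖ ≤ L * Rn⁻¹ := by
    intro x
    rw [hcomp x]
    calc ‖(fderiv ℝ ψ₁ (Rn⁻¹ • x)).comp Lmap‖
        ≤ ‖fderiv ℝ ψ₁ (Rn⁻¹ • x)‖ * ‖Lmap‖ := ContinuousLinearMap.opNorm_comp_le _ _
      _ ≤ L * Rn⁻¹ := mul_le_mul (hL _) hLnorm (norm_nonneg _) hL0
  have hsupp0 : ∀ x : E3, x ∉ closedBall (0:E3) (4*Rn) → fderiv ℝ φR x = 0 := by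
    intro x hx
    by_contra hne
    have hmem : x ∈ tsupport φR := support_fderiv_subset ℝ (Function.mem_support.2 hne)
    have h3 : tsupport φR ⊆ closedBall (0:E3) (4*Rn) := by
      apply closure_minimal ?_ Metric.isClosed_closedBall
      intro y hy
      have h4' : ψ₁ (Rn⁻¹ • y) ≠ 0 := by simpa [hφR] using hy
      have h4 : Rn⁻¹ • y ∈ tsupport ψ₁ := subset_closure h4'
      have h5 := hψsupp h4
      rw [mem_ball_zero_iff, hsm] at h5
      rw [mem_closedBall_zero_iff]
      have h6 := mul_lt_mul_of_pos_right h5 hRpos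
      rw [mul_comm Rn⁻¹ ‖y‖, mul_assoc, hinv, mul_one] at h6
      linarith
    exact hx (h3 hmem)
  have hLsm : ContDiff ℝ (⊤:ℕ∞) (fun y : E3 => Rn⁻¹ • y) := contDiff_const_smul _
  have hφsm2 : ContDiff ℝ (⊤:ℕ∞) φR := hψsm.comp hLsm
  have hcont2 : Continuous fun x : E3 => ‖fderiv ℝ φR x‖^2 :=
    ((hφsm2.continuous_fderiv (by simp)).norm).pow 2
  have hvol : (volume (closedBall (0:E3) (4*Rn))).toReal = (4*Rn)^3 * vb := by
    rw [Measure.addHaar_closedBall volume 0 (by positivity),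
      show Module.finrank ℝ E3 = 3 from finrank_euclideanSpace_fin,
      ENNReal.toReal_mul, ENNReal.toReal_ofReal (by positivity), hvb]
  have hgrad : (∫ x, ‖fderiv ℝ φR x‖^2) ≤ A * Rn := by
    have heq : (∫ x, ‖fderiv ℝ φR x‖^2)
        = ∫ x in closedBall (0:E3) (4*Rn), ‖fderiv ℝ φR x‖^2 := by
      symm
      apply setIntegral_eq_integral_of_forall_compl_eq_zero
      intro x hx
      rw [hsupp0 x hx]
      simp
    have hb : ‖∫ x in closedBall (0:E3) (4*Rn), ‖fderiv ℝ φR x‖^2‖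
        ≤ (L*Rn⁻¹)^2 * (volume (closedBall (0:E3) (4*Rn))).toReal := by
      apply norm_setIntegral_le_of_norm_le_const measure_closedBall_lt_top
      · intro x _
        rw [Real.norm_eq_abs, abs_of_nonneg (by positivity)]
        exact pow_le_pow_left₀ (norm_nonneg _) (hgradbd x) 2
    have hfin : (L*Rn⁻¹)^2 * ((4*Rn)^3 * vb) = A * Rn := by
      rw [hA]
      field_simp
      ring
    calc (∫ x, ‖fderiv ℝ φR x‖^2)
        = ∫ x in closedBall (0:E3) (4*Rn), ‖fderiv ℝ φR x‖^2 := heq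
      _ ≤ ‖∫ x in closedBall (0:E3) (4*Rn), ‖fderiv ℝ φR x‖^2‖ := le_abs_self _
      _ ≤ (L*Rn⁻¹)^2 * (volume (closedBall (0:E3) (4*Rn))).toReal := hb
      _ = A * Rn := by rw [hvol]; exact hfin
  set g : E3 → ℝ := fun x => ψ₁ (Rn⁻¹ • x)^2 with hgdef
  have hgc : Continuous g := (hψc.comp (continuous_const_smul Rn⁻¹)).pow 2
  have hg0 : ∀ y, 0 ≤ g y := fun y => sq_nonneg _
  have hg1 : ∀ y, g y ≤ 1 := fun y => pow_le_one₀ (hψ0 _) (hψle _)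
  have hgone : ∀ y : E3, ‖y‖ < 2*Rn → g y = 1 := by
    intro y hy
    have h1 : Rn⁻¹ • y ∈ ball (0:E3) 2 := by
      rw [mem_ball_zero_iff, hsm]
      have h6 := mul_lt_mul_of_pos_left hy (inv_pos.2 hRpos)
      rw [mul_comm 2 Rn, ← mul_assoc, hinv, one_mul] at h6
      linarith
    rw [hgdef]
    simp [hψone _ h1]
  set f : E3 → ℝ := (ball (0:E3) Rn).indicator m with hfdef
  have h4ω : 4*ω₁ ≤ Rn * ω₀ := by
    rw [div_le_iff₀ hω₀] at hRω
    linarith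
  have hRn13 : Rn ≤ Rn^3 := by nlinarith [sq_nonneg (Rn-1), sq_nonneg Rn]
  have hRn3 : ω₁ < ω₀ * Rn^3 := by
    nlinarith [h4ω, hω₁, mul_le_mul_of_nonneg_left hRn13 hω₀.le]
  have hmint : IntegrableOn m (ball (0:E3) Rn) volume := by
    by_contra hni
    have h6 := hm3 Rn (by linarith) 0
    rw [integral_undef hni] at h6
    nlinarith
  have hfint : Integrable f volume := (integrable_indicator_iff measurableSet_ball).2 hmint
  have hf0 : ∀ x, 0 ≤ f x := fun x => Set.indicator_nonneg (fun y _ => hm0 y) x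
  have hK0 : ∀ x y : E3, 0 ≤ Real.exp (-a * ‖x - y‖) / ‖x - y‖ :=
    fun x y => div_nonneg (Real.exp_nonneg _) (norm_nonneg _)
  have hKbase : Integrable (fun z : E3 => Real.exp (-a₁ * ‖z‖) / ‖z‖) volume :=
    integrable_yukawa ha₁
  have hKle : ∀ x y : E3, Real.exp (-a * ‖x - y‖) / ‖x - y‖ * g y
      ≤ Real.exp (-a₁ * ‖x - y‖) / ‖x - y‖ := by
    intro x y
    have h1 : Real.exp (-a * ‖x - y‖) / ‖x - y‖ * g y
        ≤ Real.exp (-a * ‖x - y‖) / ‖x - y‖ * 1 :=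
      mul_le_mul_of_nonneg_left (hg1 y) (hK0 x y)
    rw [mul_one] at h1
    exact h1.trans (kernel_mono ha₁.le ha₁a (norm_nonneg _))
  have hKtrans : ∀ x : E3,
      Integrable (fun y => Real.exp (-a₁ * ‖x - y‖) / ‖x - y‖) volume :=
    fun x => hKbase.comp_sub_left x
  have hKm : Measurable (fun p : E3 × E3 =>
      Real.exp (-a * ‖p.1 - p.2‖) / ‖p.1 - p.2‖ * g p.2) := by
    have hd : Measurable fun p : E3 × E3 => ‖p.1 - p.2‖ :=
      (measurable_fst.sub measurable_snd).norm
    exact (((hd.const_mul (-a)).exp).div hd).mul (hgc.measurable.comp measurable_snd)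
  have hKgint : ∀ x : E3,
      Integrable (fun y => Real.exp (-a * ‖x - y‖) / ‖x - y‖ * g y) volume := by
    intro x
    have hmA : AEStronglyMeasurable
        (fun y => Real.exp (-a * ‖x - y‖) / ‖x - y‖ * g y) volume :=
      (hKm.comp measurable_prodMk_left).aestronglyMeasurable
    apply Integrable.mono' (hKtrans x) hmA
    filter_upwards with y
    show ‖Real.exp (-a * ‖x - y‖) / ‖x - y‖ * g y‖ ≤ Real.exp (-a₁ * ‖x - y‖) / ‖x - y‖
    rw [Real.norm_eq_abs, abs_of_nonneg (mul_nonneg (hK0 x y) (hg0 y))]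
    exact hKle x y
  set G : E3 → ℝ := fun x => ∫ y, Real.exp (-a * ‖x - y‖) / ‖x - y‖ * g y with hGdef
  have hGsm : StronglyMeasurable G := hKm.stronglyMeasurable.integral_prod_right'
  have hG0 : ∀ x, 0 ≤ G x :=
    fun x => integral_nonneg fun y => mul_nonneg (hK0 x y) (hg0 y)
  set κ := ∫ z : E3, Real.exp (-a₁ * ‖z‖) / ‖z‖ with hκdef
  have hGκ : ∀ x, G x ≤ κ := by
    intro x
    rw [hκdef, ← integral_sub_left_eq_self (fun z : E3 => Real.exp (-a₁ * ‖z‖) / ‖z‖) volume x]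
    exact integral_mono (hKgint x) (hKtrans x) fun y => hKle x y
  have hGlow : ∀ x ∈ ball (0:E3) Rn, c₁ ≤ G x := by
    intro x hx
    have hxn : ‖x‖ < Rn := mem_ball_zero_iff.1 hx
    have h1 : (∫ _ in ball x 1, Real.exp (-a₂) ∂volume)
        ≤ ∫ y in ball x 1, Real.exp (-a * ‖x - y‖) / ‖x - y‖ * g y ∂volume := by
      apply setIntegral_mono_ae_restrict
        (integrableOn_const measure_ball_lt_top.ne) ((hKgint x).integrableOn)
      have hne : ∀ᵐ y ∂(volume.restrict (ball x 1)), y ≠ x := by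
        apply ae_restrict_of_ae
        rw [ae_iff]
        simp only [ne_eq, not_not, Set.setOf_eq_eq_singleton]
        exact measure_singleton x
      filter_upwards [hne, ae_restrict_mem measurableSet_ball] with y hyne hymem
      have hd0 : 0 < ‖x - y‖ := by
        rw [norm_pos_iff, sub_ne_zero]
        exact fun h => hyne h.symm
      have hd1 : ‖x - y‖ < 1 := by
        rw [norm_sub_rev]
        exact mem_ball_iff_norm.1 hymem
      have hgy : g y = 1 := by
        apply hgone
        have h7 : ‖y‖ ≤ ‖x‖ + ‖x - y‖ := by
          calc ‖y‖ = ‖x - (x - y)‖ := by rw [_root_.sub_sub_cancel]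
            _ ≤ ‖x‖ + ‖x - y‖ := norm_sub_le _ _
        linarith
      rw [hgy, mul_one, le_div_iff₀ hd0]
      have ha₂0 : 0 ≤ a := ha0.le
      calc Real.exp (-a₂) * ‖x - y‖ ≤ Real.exp (-a₂) * 1 :=
            mul_le_mul_of_nonneg_left hd1.le (Real.exp_nonneg _)
        _ = Real.exp (-a₂) := mul_one _
        _ ≤ Real.exp (-a * ‖x - y‖) := by
            apply Real.exp_le_exp.2
            nlinarith
    have h2 : (∫ _ in ball x 1, Real.exp (-a₂) ∂volume) = c₁ := by
      rw [setIntegral_const, measureReal_def, Measure.addHaar_ball_center volume x, smul_eq_mul, ← hvb,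
        hc₁def, mul_comm]
    have h3 : (∫ y in ball x 1, Real.exp (-a * ‖x - y‖) / ‖x - y‖ * g y ∂volume) ≤ G x :=
      setIntegral_le_integral (hKgint x)
        (Filter.Eventually.of_forall fun y => mul_nonneg (hK0 x y) (hg0 y))
    rw [← h2]
    exact le_trans h1 h3
  have hDa : Da a f g = ∫ x, f x * G x := by
    simp only [Da, hGdef]
    congr 1
    funext x
    rw [← integral_const_mul]
    congr 1
    funext y
    ring
  have hFint : Integrable (fun x => f x * G x) volume := by
    have hmB : AEStronglyMeasurable (fun x => f x * G x) volume :=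
      hfint.aestronglyMeasurable.mul hGsm.aestronglyMeasurable
    apply Integrable.mono' (hfint.const_mul κ) hmB
    filter_upwards with x
    show ‖f x * G x‖ ≤ κ * f x
    rw [Real.norm_eq_abs, abs_of_nonneg (mul_nonneg (hf0 x) (hG0 x))]
    calc f x * G x ≤ f x * κ := mul_le_mul_of_nonneg_left (hGκ x) (hf0 x)
      _ = κ * f x := mul_comm _ _
  have hlow : c₁ * (ω₀ * Rn^3 - ω₁) ≤ Da a f g := by
    rw [hDa]
    have hstep : (∫ x, c₁ * f x) ≤ ∫ x, f x * G x := by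
      apply integral_mono (hfint.const_mul c₁) hFint
      intro x
      show c₁ * f x ≤ f x * G x
      by_cases hx : x ∈ ball (0:E3) Rn
      · have hfx : f x = m x := Set.indicator_of_mem hx m
        rw [hfx]
        calc c₁ * m x ≤ G x * m x := mul_le_mul_of_nonneg_right (hGlow x hx) (hm0 x)
          _ = m x * G x := mul_comm _ _
      · have hfx : f x = 0 := Set.indicator_of_notMem hx m
        rw [hfx]
        simp
    have hind : (∫ x, c₁ * f x) = c₁ * ∫ z in ball (0:E3) Rn, m z := by
      rw [integral_const_mul, hfdef, integral_indicator measurableSet_ball]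
    have h8 := hm3 Rn (by linarith) 0
    calc c₁ * (ω₀ * Rn^3 - ω₁) ≤ c₁ * ∫ z in ball (0:E3) Rn, m z :=
          mul_le_mul_of_nonneg_left h8 hc₁0.le
      _ = ∫ x, c₁ * f x := hind.symm
      _ ≤ ∫ x, f x * G x := hstep
  have h4A : 4*A ≤ Rn * (c₁*ω₀) := by
    rw [div_le_iff₀ (by positivity)] at hRA
    linarith
  have e1 : c₁*ω₀*Rn^2 ≤ c₁*ω₀*Rn^3 := by
    nlinarith [sub_nonneg.2 hR1, mul_nonneg hω₀'.le (sq_nonneg Rn)]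
  have e2 : 4*(A*Rn) ≤ c₁*ω₀*Rn^2 := by
    nlinarith [mul_le_mul_of_nonneg_right h4A hRpos.le]
  have e4 : 4*(c₁*ω₁) ≤ c₁*ω₀*Rn^3 := by
    have t1 := mul_le_mul_of_nonneg_left h4ω hc₁0.le
    have t2 := mul_le_mul_of_nonneg_left (mul_le_mul_of_nonneg_left hRn13 hω₀.le) hc₁0.le
    nlinarith [t1, t2]
  have hfinal : A * Rn + c₁ * ω₁ ≤ c₁ * ω₀ / 2 * Rn^3 := by linarith
  calc (∫ x, ‖fderiv ℝ φR x‖^2) - Da a f g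
      ≤ A * Rn - c₁ * (ω₀ * Rn^3 - ω₁) := by linarith
    _ ≤ -(c₁ * ω₀ / 2) * Rn^3 := by nlinarith
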